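/- Two graphs are strongly equivalent with respect to hamiltonicity if and only if they are equal: G ≡^{hc}ₛ H iff G = H, where G ≡^{hc} H means that G and H either both have a hamiltonian cycle or both do not. -/

import Mathlib

/-- Graphs are finite sets of edges, an edge being a 2-element subset of the
vertex type `V`. -/
abbrev EGraph (V : Type) [DecidableEq V] := Finset {e : Finset V // e.card = 2}

/-- The vertex set of a graph: all endpoints of its edges (no isolated vertices). -/
def EGraph.verts {V : Type} [DecidableEq V] (G : EGraph V) : Finset V :=
  G.sup (fun e => e.1)

/-- The simple graph on `V` determined by a finite edge set. -/
def EGraph.toSG {V : Type} [DecidableEq V] (G : EGraph V) : SimpleGraph V :=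
  SimpleGraph.fromRel (fun u v => ∃ e ∈ G, e.1 = ({u, v} : Finset V))

/-- A graph is hamiltonian if it contains a cycle passing through all of its
vertices. -/
def EGraph.IsHamiltonian {V : Type} [DecidableEq V] (G : EGraph V) : Prop :=
  ∃ (v : V) (w : (EGraph.toSG G).Walk v v),
    w.IsCycle ∧ ∀ u ∈ EGraph.verts G, u ∈ w.support


open List

set_option linter.unusedSectionVars false

variable {V : Type} [DecidableEq V]

namespace Ham

/-! ### List infix-pair lemmas -/

lemma infix_pair_iff {x y : V} : ∀ {L : List V},
    [x, y] <:+: L ↔ ∃ l₁ l₂, L = l₁ ++ x :: y :: l₂ := by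
  intro L
  constructor
  · rintro ⟨l₁, l₂, rfl⟩; exact ⟨l₁, l₂, by simp⟩
  · rintro ⟨l₁, l₂, rfl⟩; exact ⟨l₁, l₂, by simp⟩

lemma infix_pair_mem {x y : V} {L : List V} (h : [x, y] <:+: L) :
    x ∈ L.dropLast ∧ y ∈ L.tail := by
  rw [infix_pair_iff] at h
  obtain ⟨l₁, l₂, rfl⟩ := h
  constructor
  · have : l₁ ++ x :: y :: l₂ = (l₁ ++ [x]) ++ (y :: l₂) := by simp
    rw [this, List.dropLast_append_of_ne_nil (l' := l₁ ++ [x]) (by simp)]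
    simp
  · rcases l₁ with _ | ⟨u, l₁⟩
    · simp
    · simp [List.tail_cons]

lemma succ_unique {x y y' : V} : ∀ {L : List V}, L.Nodup →
    [x, y] <:+: L → [x, y'] <:+: L → y = y'
  | [], _, h, _ => by
      obtain ⟨l₁, l₂, h⟩ := h; simp at h
  | (u :: L), hn, h, h' => by
      rw [List.infix_cons_iff] at h h'
      rcases h with h | h
      · rcases h' with h' | h'
        · rw [List.cons_prefix_cons] at h h'
          obtain ⟨rfl, h⟩ := h
          obtain ⟨-, h'⟩ := h'
          rcases L with _ | ⟨a, L⟩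
          · simp at h
          · rw [List.cons_prefix_cons] at h h'
            exact h.1.trans h'.1.symm
        · rw [List.cons_prefix_cons] at h
          obtain ⟨rfl, -⟩ := h
          exact absurd (h'.subset (by simp)) (List.nodup_cons.1 hn).1
      · rcases h' with h' | h'
        · rw [List.cons_prefix_cons] at h'
          obtain ⟨rfl, -⟩ := h'
          exact absurd (h.subset (by simp)) (List.nodup_cons.1 hn).1
        · exact succ_unique (List.nodup_cons.1 hn).2 h h'

lemma pred_unique {x x' y : V} {L : List V} (hn : L.Nodup)
    (h : [x, y] <:+: L) (h' : [x', y] <:+: L) : x = x' := by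
  have hr : [y, x] <:+: L.reverse := by
    have := h.reverse; simpa using this
  have hr' : [y, x'] <:+: L.reverse := by
    have := h'.reverse; simpa using this
  exact succ_unique (List.nodup_reverse.2 hn) hr hr'

/-- the list of consecutive-pair edges of a list -/
def pairs (L : List V) : List (Sym2 V) := List.zipWith (fun x y => s(x, y)) L L.tail

@[simp] lemma pairs_nil : pairs ([] : List V) = [] := rfl
@[simp] lemma pairs_single (x : V) : pairs [x] = [] := rfl
@[simp] lemma pairs_cons_cons (x y : V) (L : List V) :
    pairs (x :: y :: L) = s(x, y) :: pairs (y :: L) := rfl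

lemma length_pairs : ∀ (L : List V), (pairs L).length + 1 = L.length ∨ L = []
  | [] => Or.inr rfl
  | [x] => Or.inl (by simp [pairs])
  | (x :: y :: L) => by
      rcases length_pairs (y :: L) with h | h
      · refine Or.inl ?_
        rw [pairs_cons_cons]
        simp only [List.length_cons] at h ⊢
        omega
      · simp at h

lemma mem_pairs_iff {p : Sym2 V} : ∀ {L : List V},
    p ∈ pairs L ↔ ∃ x y, p = s(x, y) ∧ [x, y] <:+: L := by
  intro L
  induction L with
  | nil =>
    simp only [pairs_nil, List.not_mem_nil, false_iff]
    rintro ⟨x, y, -, ⟨l₁, l₂, h⟩⟩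
    simp at h
  | cons u L ih =>
    rcases L with _ | ⟨v, L⟩
    · simp only [pairs_single, List.not_mem_nil, false_iff]
      rintro ⟨x, y, -, h⟩
      obtain ⟨-, hy⟩ := infix_pair_mem h
      simp at hy
    · rw [pairs_cons_cons, List.mem_cons, ih]
      constructor
      · rintro (rfl | ⟨x, y, rfl, hxy⟩)
        · exact ⟨u, v, rfl, ⟨[], L, rfl⟩⟩
        · exact ⟨x, y, rfl, List.infix_cons_iff.2 (Or.inr hxy)⟩
      · rintro ⟨x, y, rfl, hxy⟩
        rw [List.infix_cons_iff] at hxy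
        rcases hxy with h | h
        · rw [List.cons_prefix_cons] at h
          obtain ⟨rfl, h⟩ := h
          rw [List.cons_prefix_cons] at h
          obtain ⟨rfl, -⟩ := h
          exact Or.inl rfl
        · exact Or.inr ⟨x, y, rfl, h⟩

lemma pairs_mono {L : List V} {x y : V} (h : [x, y] <:+: L) : s(x, y) ∈ pairs L :=
  mem_pairs_iff.2 ⟨x, y, rfl, h⟩

lemma pairs_nodup : ∀ {L : List V}, L.Nodup → (pairs L).Nodup
  | [], _ => by simp
  | [x], _ => by simp
  | (x :: y :: L), hn => by
      rw [pairs_cons_cons, List.nodup_cons]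
      refine ⟨?_, pairs_nodup (List.nodup_cons.1 hn).2⟩
      intro hmem
      obtain ⟨u, v, huv, hinf⟩ := mem_pairs_iff.1 hmem
      have hx : x ∉ y :: L := (List.nodup_cons.1 hn).1
      have hu : u ∈ y :: L := hinf.subset (by simp)
      have hv : v ∈ y :: L := hinf.subset (by simp)
      rw [Sym2.mk_eq_mk_iff (p := (x, y)) (q := (u, v))] at huv
      rcases huv with h | h <;>
      · rw [Prod.ext_iff] at h
        obtain ⟨h1, h2⟩ := h
        simp only at h1 h2
        subst h1
        first | exact hx hu | exact hx hv

open SimpleGraph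

/-- a single-edge graph (empty if endpoints coincide) -/
def pairE (x y : V) : EGraph V :=
  if h : x = y then ∅ else {⟨{x, y}, Finset.card_pair h⟩}

lemma mem_pairE_self {x y : V} (h : x ≠ y) :
    (⟨{x, y}, Finset.card_pair h⟩ : {e : Finset V // e.card = 2}) ∈ pairE x y := by
  simp [pairE, h]

lemma mem_pairE {e : {e : Finset V // e.card = 2}} {x y : V} (he : e ∈ pairE x y) :
    x ≠ y ∧ e.1 = {x, y} := by
  by_cases h : x = y
  · simp [pairE, h] at he
  · simp only [pairE, dif_neg h, Finset.mem_singleton] at he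
    exact ⟨h, by rw [he]⟩

/-- the path graph along a list of vertices -/
def edgesAlong : List V → EGraph V
  | x :: y :: L => pairE x y ∪ edgesAlong (y :: L)
  | _ => ∅

lemma mem_edgesAlong_iff {e : {e : Finset V // e.card = 2}} : ∀ {L : List V},
    e ∈ edgesAlong L ↔ ∃ x y, x ≠ y ∧ e.1 = {x, y} ∧ [x, y] <:+: L
  | [] => by
      simp only [edgesAlong, Finset.notMem_empty, false_iff]
      rintro ⟨x, y, -, -, ⟨l₁, l₂, h⟩⟩
      simp at h
  | [u] => by
      simp only [edgesAlong, Finset.notMem_empty, false_iff]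
      rintro ⟨x, y, -, -, h⟩
      obtain ⟨-, hy⟩ := infix_pair_mem h
      simp at hy
  | (u :: v :: L) => by
      rw [show edgesAlong (u :: v :: L) = pairE u v ∪ edgesAlong (v :: L) from rfl,
        Finset.mem_union, mem_edgesAlong_iff]
      constructor
      · rintro (h | ⟨x, y, hxy, he, hinf⟩)
        · obtain ⟨hne, he⟩ := mem_pairE h
          exact ⟨u, v, hne, he, ⟨[], L, rfl⟩⟩
        · exact ⟨x, y, hxy, he, List.infix_cons_iff.2 (Or.inr hinf)⟩
      · rintro ⟨x, y, hxy, he, hinf⟩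
        rw [List.infix_cons_iff] at hinf
        rcases hinf with h | h
        · rw [List.cons_prefix_cons] at h
          obtain ⟨rfl, h⟩ := h
          rw [List.cons_prefix_cons] at h
          obtain ⟨rfl, -⟩ := h
          left
          have : e = ⟨{x, y}, Finset.card_pair hxy⟩ := Subtype.ext he
          rw [this]; exact mem_pairE_self hxy
        · exact Or.inr ⟨x, y, hxy, he, h⟩

lemma mem_edgesAlong_of_infix {x y : V} {L : List V} (hne : x ≠ y) (h : [x, y] <:+: L) :
    (⟨{x, y}, Finset.card_pair hne⟩ : {e : Finset V // e.card = 2}) ∈ edgesAlong L :=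
  mem_edgesAlong_iff.2 ⟨x, y, hne, rfl, h⟩

lemma mem_verts_iff {X : EGraph V} {x : V} :
    x ∈ X.verts ↔ ∃ e ∈ X, x ∈ e.1 := Finset.mem_sup

lemma verts_union (X Y : EGraph V) : (X ∪ Y).verts = X.verts ∪ Y.verts := by
  simp [EGraph.verts, Finset.sup_union]

lemma pair_eq {x y a b : V} (hxy : x ≠ y) (h : ({x, y} : Finset V) = {a, b}) :
    (x = a ∧ y = b) ∨ (x = b ∧ y = a) := by
  have hx : x ∈ ({a, b} : Finset V) := h ▸ (by simp : x ∈ ({x, y} : Finset V))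
  have hy : y ∈ ({a, b} : Finset V) := h ▸ (by simp : y ∈ ({x, y} : Finset V))
  simp only [Finset.mem_insert, Finset.mem_singleton] at hx hy
  rcases hx with hx | hx <;> rcases hy with hy | hy
  · exact absurd (hx.trans hy.symm) hxy
  · exact Or.inl ⟨hx, hy⟩
  · exact Or.inr ⟨hx, hy⟩
  · exact absurd (hx.trans hy.symm) hxy

lemma toSG_adj {X : EGraph V} {x y : V} :
    (EGraph.toSG X).Adj x y ↔ x ≠ y ∧ ∃ e ∈ X, e.1 = {x, y} := by
  rw [EGraph.toSG, SimpleGraph.fromRel_adj]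
  constructor
  · rintro ⟨hne, (⟨e, he, h⟩ | ⟨e, he, h⟩)⟩
    · exact ⟨hne, e, he, h⟩
    · exact ⟨hne, e, he, h.trans (Finset.pair_comm y x)⟩
  · rintro ⟨hne, e, he, h⟩
    exact ⟨hne, Or.inl ⟨e, he, h⟩⟩

lemma adj_mem_verts {X : EGraph V} {x y : V} (h : (EGraph.toSG X).Adj x y) :
    x ∈ X.verts ∧ y ∈ X.verts := by
  obtain ⟨hne, e, he, hpair⟩ := toSG_adj.1 h
  constructor
  · exact mem_verts_iff.2 ⟨e, he, by rw [hpair]; simp⟩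
  · exact mem_verts_iff.2 ⟨e, he, by rw [hpair]; simp⟩

lemma verts_edgesAlong_subset {L : List V} {x : V} (h : x ∈ (edgesAlong L).verts) :
    x ∈ L := by
  obtain ⟨e, he, hx⟩ := mem_verts_iff.1 h
  obtain ⟨u, v, -, hpair, hinf⟩ := mem_edgesAlong_iff.1 he
  rw [hpair] at hx
  simp only [Finset.mem_insert, Finset.mem_singleton] at hx
  rcases hx with rfl | rfl
  · exact hinf.subset (by simp)
  · exact hinf.subset (by simp)

lemma mem_verts_edgesAlong : ∀ {L : List V}, L.Nodup →
    ∀ {x : V}, x ∈ L → L.length ≥ 2 → x ∈ (edgesAlong L).verts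
  | (u :: v :: L), hn, x, hx, _ => by
    have hne : u ≠ v := by
      intro h; exact (List.nodup_cons.1 hn).1 (h ▸ (by simp))
    have hmem : (⟨{u, v}, Finset.card_pair hne⟩ : {e : Finset V // e.card = 2}) ∈
        edgesAlong (u :: v :: L) := mem_edgesAlong_of_infix hne ⟨[], L, rfl⟩
    rcases List.mem_cons.1 hx with rfl | hx
    · exact mem_verts_iff.2 ⟨_, hmem, by simp⟩
    · rcases L with _ | ⟨w, L⟩
      · rcases List.mem_cons.1 hx with rfl | hx
        · exact mem_verts_iff.2 ⟨_, hmem, by simp⟩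
        · simp at hx
      · have := mem_verts_edgesAlong (List.nodup_cons.1 hn).2 hx (by simp)
        obtain ⟨e, he, hxe⟩ := mem_verts_iff.1 this
        refine mem_verts_iff.2 ⟨e, ?_, hxe⟩
        rw [show edgesAlong (u :: v :: w :: L) = pairE u v ∪ edgesAlong (v :: w :: L) from rfl]
        exact Finset.mem_union_right _ he

/-- build a walk along a list of vertices -/
def walkAlong (Gr : SimpleGraph V) : (u : V) → (L : List V) → (v : V) →
    List.Chain Gr.Adj u (L ++ [v]) → Gr.Walk u v
  | _, [], _, h => SimpleGraph.Walk.cons (by simpa using List.chain_cons.1 h |>.1)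
      SimpleGraph.Walk.nil
  | _, (x :: L), v, h => SimpleGraph.Walk.cons (List.chain_cons.1 h).1
      (walkAlong Gr x L v (List.chain_cons.1 h).2)

lemma walkAlong_support (Gr : SimpleGraph V) : ∀ (u : V) (L : List V) (v : V)
    (h : List.Chain Gr.Adj u (L ++ [v])),
    (walkAlong Gr u L v h).support = u :: (L ++ [v])
  | u, [], v, h => by simp [walkAlong]
  | u, (x :: L), v, h => by
      rw [walkAlong, SimpleGraph.Walk.support_cons]
      erw [walkAlong_support]
      simp

lemma walkAlong_edges (Gr : SimpleGraph V) : ∀ (u : V) (L : List V) (v : V)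
    (h : List.Chain Gr.Adj u (L ++ [v])),
    (walkAlong Gr u L v h).edges = pairs (u :: (L ++ [v]))
  | u, [], v, h => by simp [walkAlong, pairs]
  | u, (x :: L), v, h => by
      rw [walkAlong, SimpleGraph.Walk.edges_cons]
      erw [walkAlong_edges]
      simp [pairs]

/-- interleave two lists -/
def interl : List V → List V → List V
  | (z :: zs), (v : V) :: vs => z :: v :: interl zs vs
  | _, _ => []

lemma mem_interl : ∀ {zs vs : List V} {x : V}, x ∈ interl zs vs → x ∈ zs ∨ x ∈ vs
  | (z :: zs), (v :: vs), x, h => by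
      rcases h with _ | ⟨_, h⟩
      · exact Or.inl (by simp)
      · rcases h with _ | ⟨_, h⟩
        · exact Or.inr (by simp)
        · rcases mem_interl h with h | h
          · exact Or.inl (List.mem_cons_of_mem _ h)
          · exact Or.inr (List.mem_cons_of_mem _ h)
  | [], _, x, h => by simp [interl] at h
  | (z :: zs), [], x, h => by simp [interl] at h

lemma interl_nodup : ∀ {zs vs : List V}, zs.Nodup → vs.Nodup →
    (∀ z ∈ zs, z ∉ vs) → (interl zs vs).Nodup
  | [], vs, _, _, _ => by simp [interl]
  | (z :: zs), [], _, _, _ => by simp [interl]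
  | (z :: zs), (v :: vs), hz, hv, hd => by
      rw [interl, List.nodup_cons, List.nodup_cons]
      refine ⟨?_, ?_, interl_nodup (List.nodup_cons.1 hz).2 (List.nodup_cons.1 hv).2
        (fun a ha hav => hd a (List.mem_cons_of_mem _ ha) (List.mem_cons_of_mem _ hav))⟩
      · intro h
        rcases List.mem_cons.1 h with rfl | h
        · exact hd z (by simp) (by simp)
        · rcases mem_interl h with h | h
          · exact (List.nodup_cons.1 hz).1 h
          · exact hd z (by simp) (List.mem_cons_of_mem _ h)
      · intro h
        rcases mem_interl h with h | h
        · exact hd _ (List.mem_cons_of_mem _ h) (by simp)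
        · exact (List.nodup_cons.1 hv).1 h

lemma cycle_two_edges {G : SimpleGraph V} {v x : V} {w : G.Walk v v} (hw : w.IsCycle)
    (hx : x ∈ w.support) :
    ∃ y₁ y₂, y₁ ≠ y₂ ∧ s(x, y₁) ∈ w.edges ∧ s(x, y₂) ∈ w.edges := by
  have hc : (w.rotate x hx).IsCycle := hw.rotate hx
  have hperm : (w.rotate x hx).edges ~r w.edges := w.rotate_edges x hx
  suffices h : ∃ y₁ y₂, y₁ ≠ y₂ ∧ s(x, y₁) ∈ (w.rotate x hx).edges ∧
      s(x, y₂) ∈ (w.rotate x hx).edges by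
    obtain ⟨y₁, y₂, h1, h2, h3⟩ := h
    exact ⟨y₁, y₂, h1, hperm.mem_iff.1 h2, hperm.mem_iff.1 h3⟩
  obtain ⟨u, hadj, q, hq⟩ := SimpleGraph.Walk.not_nil_iff.1 hc.not_nil
  have hlen : 2 ≤ q.length := by
    have := hc.three_le_length
    rw [hq, SimpleGraph.Walk.length_cons] at this
    omega
  have hqd : q.darts ≠ [] := by
    intro h
    have h0 := q.length_darts
    rw [h] at h0
    simp at h0
    omega
  set d := q.darts.getLast hqd with hd
  have hdsnd : d.toProd.2 = x := by rw [hd, SimpleGraph.Walk.getLast_darts_eq_lastDart]; simp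
  have hde : d.edge ∈ q.edges :=
    List.mem_map_of_mem (List.getLast_mem hqd)
  have hdedge : d.edge = s(d.toProd.1, x) := by
    rw [SimpleGraph.Dart.edge, ← hdsnd]
  refine ⟨u, d.toProd.1, ?_, ?_, ?_⟩
  · intro h
    have htrail := hc.isCircuit.isTrail
    rw [hq] at htrail
    have hnd := htrail.edges_nodup
    rw [SimpleGraph.Walk.edges_cons, List.nodup_cons] at hnd
    apply hnd.1
    have : s(x, u) = d.edge := by rw [h, hdedge]; exact Sym2.eq_swap
    rw [this]
    exact hde
  · rw [hq, SimpleGraph.Walk.edges_cons]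
    exact List.mem_cons_self
  · rw [hq, SimpleGraph.Walk.edges_cons]
    refine List.mem_cons_of_mem _ ?_
    have : s(x, d.toProd.1) = d.edge := by rw [hdedge, Sym2.eq_swap]
    rw [this]
    exact hde

lemma interl_mem_left : ∀ {zs vs : List V}, zs.length = vs.length →
    ∀ {z : V}, z ∈ zs → z ∈ interl zs vs
  | [], _, _, _, hz => by simp at hz
  | (z' :: zs), [], h, _, _ => by simp at h
  | (z' :: zs), (v :: vs), h, z, hz => by
      rcases List.mem_cons.1 hz with rfl | hz
      · exact List.mem_cons_self
      · exact List.mem_cons_of_mem _ (List.mem_cons_of_mem _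
          (interl_mem_left (by simpa using h) hz))

lemma interl_mem_right : ∀ {zs vs : List V}, zs.length = vs.length →
    ∀ {v : V}, v ∈ vs → v ∈ interl zs vs
  | [], [], _, _, hv => by simp at hv
  | [], (v' :: vs), h, _, _ => by simp at h
  | (z' :: zs), [], _, _, hv => by simp at hv
  | (z' :: zs), (v' :: vs), h, v, hv => by
      rcases List.mem_cons.1 hv with rfl | hv
      · exact List.mem_cons_of_mem _ (List.mem_cons_self)
      · exact List.mem_cons_of_mem _ (List.mem_cons_of_mem _
          (interl_mem_right (by simpa using h) hv))

lemma interl_pair {w a x y : V} : ∀ (u : V) (zs vs : List V), zs.length = vs.length →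
    [x, y] <:+: (u :: (interl zs vs ++ [w, a])) →
    (x ∈ zs ∨ x = w) ∨ (y ∈ zs ∨ y = w)
  | u, zs, vs, hlen, hinf => by
      rw [List.infix_cons_iff] at hinf
      rcases hinf with h | h
      · rw [List.cons_prefix_cons] at h
        obtain ⟨rfl, h⟩ := h
        rcases zs with _ | ⟨z, zs⟩
        · rcases vs with _ | ⟨v, vs⟩
          · simp only [interl, List.nil_append] at h
            rw [List.cons_prefix_cons] at h
            exact Or.inr (Or.inr h.1)
          · simp at hlen
        · rcases vs with _ | ⟨v, vs⟩
          · simp at hlen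
          · rw [show interl (z :: zs) (v :: vs) = z :: v :: interl zs vs from rfl] at h
            rw [List.cons_append, List.cons_prefix_cons] at h
            exact Or.inr (Or.inl (h.1 ▸ List.mem_cons_self))
      · rcases zs with _ | ⟨z, zs⟩
        · rcases vs with _ | ⟨v, vs⟩
          · simp only [interl, List.nil_append] at h
            rw [List.infix_cons_iff] at h
            rcases h with h | h
            · rw [List.cons_prefix_cons] at h
              exact Or.inl (Or.inr h.1)
            · obtain ⟨-, hy⟩ := infix_pair_mem h
              simp at hy
          · simp at hlen
        · rcases vs with _ | ⟨v, vs⟩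
          · simp at hlen
          · rw [show interl (z :: zs) (v :: vs) = z :: v :: interl zs vs from rfl,
              List.cons_append] at h
            rw [List.infix_cons_iff] at h
            rcases h with h | h
            · rw [List.cons_prefix_cons] at h
              exact Or.inl (Or.inl (h.1 ▸ List.mem_cons_self))
            · rw [List.cons_append] at h
              rcases interl_pair v zs vs (by simpa using hlen) h with h' | h'
              · rcases h' with h' | h'
                · exact Or.inl (Or.inl (List.mem_cons_of_mem _ h'))
                · exact Or.inl (Or.inr h')
              · rcases h' with h' | h'
                · exact Or.inr (Or.inl (List.mem_cons_of_mem _ h'))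
                · exact Or.inr (Or.inr h')

lemma chain_edgesAlong {X : EGraph V} : ∀ (u : V) (L : List V), (u :: L).Nodup →
    edgesAlong (u :: L) ⊆ X → List.Chain (EGraph.toSG X).Adj u L
  | u, [], _, _ => List.Chain.nil
  | u, (x :: L), hn, hsub => by
      refine List.Chain.cons ?_ (chain_edgesAlong x L (List.nodup_cons.1 hn).2 ?_)
      · refine toSG_adj.2 ⟨?_, ?_⟩
        · intro h; exact (List.nodup_cons.1 hn).1 (h ▸ List.mem_cons_self)
        · have hne : u ≠ x := by
            intro h; exact (List.nodup_cons.1 hn).1 (h ▸ List.mem_cons_self)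
          exact ⟨_, hsub (mem_edgesAlong_of_infix hne ⟨[], L, rfl⟩), rfl⟩
      · intro e he
        apply hsub
        rw [show edgesAlong (u :: x :: L) = pairE u x ∪ edgesAlong (x :: L) from rfl]
        exact Finset.mem_union_right _ he

lemma support_subset_verts {X : EGraph V} : ∀ {x y : V} (p : (EGraph.toSG X).Walk x y),
    ¬ p.Nil → ∀ u ∈ p.support, u ∈ X.verts
  | _, _, SimpleGraph.Walk.nil, hnil, _, _ => absurd SimpleGraph.Walk.Nil.nil hnil
  | x, y, SimpleGraph.Walk.cons h q, _, u, hu => by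
      rw [SimpleGraph.Walk.support_cons, List.mem_cons] at hu
      rcases hu with rfl | hu
      · exact (adj_mem_verts h).1
      · by_cases hq : q.Nil
        · have htl : q.support.tail = [] := by
            apply List.eq_nil_of_length_eq_zero
            have h2 := q.length_support
            rw [SimpleGraph.Walk.nil_iff_length_eq.1 hq] at h2
            simp [List.length_tail, h2]
          rw [q.support_eq_cons, htl, List.mem_singleton] at hu
          exact hu ▸ (adj_mem_verts h).2
        · exact support_subset_verts q hq u hu

lemma key [Infinite V] {G H : EGraph V}
    (hGH : ∀ F : EGraph V, EGraph.IsHamiltonian (G ∪ F) ↔ EGraph.IsHamiltonian (H ∪ F))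
    {e : {e : Finset V // e.card = 2}} (heG : e ∈ G) (heH : e ∉ H) : False := by
  obtain ⟨a, b, hab, he1⟩ := Finset.card_eq_two.1 e.2
  set S : Finset V := EGraph.verts G ∪ EGraph.verts H with hS
  have haS : a ∈ S := Finset.mem_union_left _ (mem_verts_iff.2 ⟨e, heG, by rw [he1]; simp⟩)
  have hbS : b ∈ S := Finset.mem_union_left _ (mem_verts_iff.2 ⟨e, heG, by rw [he1]; simp⟩)
  have hHS : ∀ x ∈ EGraph.verts H, x ∈ S := fun x hx => Finset.mem_union_right _ hx
  -- fresh vertices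
  have hinfc : ((↑S : Set V)ᶜ).Infinite := Set.Finite.infinite_compl S.finite_toSet
  haveI := Set.infinite_coe_iff.2 hinfc
  set g := Infinite.natEmbedding (↥((↑S : Set V)ᶜ)) with hg
  set f : ℕ → V := fun i => (g i).1 with hf
  have hfinj : Function.Injective f := fun i j h => g.injective (Subtype.ext h)
  have hfS : ∀ i, f i ∉ S := fun i => (g i).2
  set vs : List V := (S \ {a, b}).toList with hvs
  set k := vs.length with hk
  set zs : List V := (List.range k).map f with hzs
  have hzslen : zs.length = vs.length := by simp [hzs, hk]
  set M : List V := interl zs vs ++ [f k] with hM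
  set Q : List V := b :: (M ++ [a]) with hQ
  set F : EGraph V := edgesAlong Q with hF
  -- membership facts
  have hvm : ∀ x ∈ vs, x ∈ S ∧ x ≠ a ∧ x ≠ b := by
    intro x hx
    rw [hvs, Finset.mem_toList, Finset.mem_sdiff] at hx
    refine ⟨hx.1, ?_, ?_⟩ <;> · intro h; exact hx.2 (by simp [h])
  have hSvs : ∀ x ∈ S, x = a ∨ x = b ∨ x ∈ vs := by
    intro x hx
    by_cases ha : x = a
    · exact Or.inl ha
    by_cases hb : x = b
    · exact Or.inr (Or.inl hb)
    refine Or.inr (Or.inr ?_)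
    rw [hvs, Finset.mem_toList, Finset.mem_sdiff]
    exact ⟨hx, by simp [ha, hb]⟩
  have hzm : ∀ x ∈ zs, ∃ i, i < k ∧ x = f i := by
    intro x hx
    rw [hzs, List.mem_map] at hx
    obtain ⟨i, hi, rfl⟩ := hx
    exact ⟨i, List.mem_range.1 hi, rfl⟩
  have hMm : ∀ x ∈ M, (∃ i, i ≤ k ∧ x = f i) ∨ x ∈ vs := by
    intro x hx
    rw [hM, List.mem_append] at hx
    rcases hx with hx | hx
    · rcases mem_interl hx with hx | hx
      · obtain ⟨i, hi, rfl⟩ := hzm x hx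
        exact Or.inl ⟨i, le_of_lt hi, rfl⟩
      · exact Or.inr hx
    · rw [List.mem_singleton] at hx
      exact Or.inl ⟨k, le_rfl, hx⟩
  have haM : a ∉ M := by
    intro hx
    rcases hMm a hx with ⟨i, -, hia⟩ | hx
    · exact hfS i (hia ▸ haS)
    · exact (hvm a hx).2.1 rfl
  have hbM : b ∉ M := by
    intro hx
    rcases hMm b hx with ⟨i, -, hib⟩ | hx
    · exact hfS i (hib ▸ hbS)
    · exact (hvm b hx).2.2 rfl
  have hQnd : Q.Nodup := by
    rw [hQ, List.nodup_cons]
    constructor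
    · rw [List.mem_append, List.mem_singleton]
      rintro (h | rfl)
      · exact hbM h
      · exact hab rfl
    · rw [List.nodup_append]
      refine ⟨?_, by simp, ?_⟩
      · rw [hM, List.nodup_append]
        refine ⟨?_, by simp, ?_⟩
        · refine interl_nodup ?_ (by rw [hvs]; exact Finset.nodup_toList _) ?_
          · rw [hzs]
            exact (List.nodup_range).map hfinj
          · intro z hz hzv
            obtain ⟨i, -, rfl⟩ := hzm z hz
            exact hfS i ((hvm _ hzv).1)
        · intro x hx y hy rfl
          rw [List.mem_singleton] at hy
          subst hy
          rcases mem_interl hx with h | h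
          · obtain ⟨i, hik, hfi⟩ := hzm _ h
            have := hfinj hfi
            omega
          · exact hfS k ((hvm _ h).1)
      · intro x hx y hy rfl
        rw [List.mem_singleton] at hy
        subst hy
        exact haM hx
  -- basic positions in Q
  have hQform : Q = b :: (interl zs vs ++ [f k, a]) := by rw [hQ, hM]; simp
  have hfkA : [f k, a] <:+: Q := ⟨b :: interl zs vs, [], by rw [hQform]; simp⟩
  obtain ⟨m0, M', hm0⟩ : ∃ m0 M', M = m0 :: M' := by
    rw [hM]
    rcases hI : interl zs vs with _ | ⟨c, I⟩
    · exact ⟨f k, [], rfl⟩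
    · exact ⟨c, I ++ [f k], by simp⟩
  have hm0M : m0 ∈ M := by rw [hm0]; simp
  have hm0Q : [b, m0] <:+: Q := ⟨[], M' ++ [a], by rw [hQ, hm0]; simp⟩
  have hQdrop : Q.dropLast = b :: M := by
    rw [hQ, ← List.cons_append, List.dropLast_concat]
  have hnotAB : ¬ [a, b] <:+: Q := by
    intro h
    have := (infix_pair_mem h).1
    rw [hQdrop, List.mem_cons] at this
    rcases this with h' | h'
    · exact hab h'
    · exact haM h'
  have hnotBA : ¬ [b, a] <:+: Q := by
    intro h
    have := succ_unique hQnd h hm0Q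
    exact haM (this ▸ hm0M)
  have hvsQ : ∀ x ∈ vs, x ∈ Q := by
    intro x hx
    rw [hQ]
    exact List.mem_cons_of_mem _ (List.mem_append_left _
      (List.mem_append_left _ (interl_mem_right hzslen hx)))
  have hfQ : ∀ i ≤ k, f i ∈ Q := by
    intro i hi
    rw [hQ]
    rcases lt_or_eq_of_le hi with hi | rfl
    · refine List.mem_cons_of_mem _ (List.mem_append_left _ (List.mem_append_left _
        (interl_mem_left hzslen ?_)))
      rw [hzs, List.mem_map]
      exact ⟨i, List.mem_range.2 hi, rfl⟩
    · exact List.mem_cons_of_mem _ (List.mem_append_left _ (by rw [hM]; simp))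
  have haQ : a ∈ Q := by rw [hQ]; simp
  have hbQ : b ∈ Q := by rw [hQ]; simp
  have hSQ : ∀ x ∈ S, x ∈ Q := by
    intro x hx
    rcases hSvs x hx with rfl | rfl | hx
    · exact haQ
    · exact hbQ
    · exact hvsQ x hx
  -- the chain and walk
  have hchain : ∀ X : EGraph V, List.Chain (EGraph.toSG (X ∪ F)).Adj b (M ++ [a]) := by
    intro X
    exact chain_edgesAlong b (M ++ [a]) hQnd Finset.subset_union_right
  -- hamiltonicity of G ∪ F
  have hadjAB : (EGraph.toSG (G ∪ F)).Adj a b :=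
    toSG_adj.2 ⟨hab, e, Finset.mem_union_left _ heG, he1⟩
  have hGF : EGraph.IsHamiltonian (G ∪ F) := by
    set p := walkAlong (EGraph.toSG (G ∪ F)) b M a (hchain G) with hp
    have hps : p.support = Q := by rw [hp, walkAlong_support]
    have hpe : p.edges = pairs Q := by rw [hp, walkAlong_edges]
    have hpath : p.IsPath := SimpleGraph.Walk.IsPath.mk' (by rw [hps]; exact hQnd)
    have hnedge : s(a, b) ∉ p.edges := by
      rw [hpe]
      intro hmem
      obtain ⟨x, y, hxy, hinf⟩ := mem_pairs_iff.1 hmem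
      rw [Sym2.mk_eq_mk_iff (p := (a, b)) (q := (x, y))] at hxy
      rcases hxy with h | h <;>
        · rw [Prod.ext_iff] at h
          obtain ⟨h1, h2⟩ := h
          simp only at h1 h2
          subst h1
          subst h2
          first | exact hnotAB hinf | exact hnotBA hinf
    have hcyc : (SimpleGraph.Walk.cons hadjAB p).IsCycle :=
      SimpleGraph.Path.cons_isCycle ⟨p, hpath⟩ hadjAB hnedge
    refine ⟨a, SimpleGraph.Walk.cons hadjAB p, hcyc, ?_⟩
    intro u hu
    rw [verts_union] at hu
    rw [SimpleGraph.Walk.support_cons, hps]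
    rcases Finset.mem_union.1 hu with hu | hu
    · exact List.mem_cons_of_mem _ (hSQ u (Finset.mem_union_left _ hu))
    · exact List.mem_cons_of_mem _ (verts_edgesAlong_subset hu)
  -- the assumed hamiltonian cycle in H ∪ F
  obtain ⟨v0, w, hw, hcov⟩ := (hGH F).1 hGF
  have hvertsQ : ∀ x, x ∈ (H ∪ F).verts ↔ x ∈ Q := by
    intro x
    constructor
    · intro hx
      rw [verts_union] at hx
      rcases Finset.mem_union.1 hx with hx | hx
      · exact hSQ x (hHS x hx)
      · exact verts_edgesAlong_subset hx
    · intro hx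
      rw [verts_union]
      refine Finset.mem_union_right _ (mem_verts_edgesAlong hQnd hx ?_)
      rw [hQ]
      simp
  have hedge_or : ∀ x y : V, s(x, y) ∈ w.edges → x ∉ S →
      [x, y] <:+: Q ∨ [y, x] <:+: Q := by
    intro x y hxy hxS
    have hadj := (EGraph.toSG (H ∪ F)).mem_edgeSet.1 (w.edges_subset_edgeSet hxy)
    obtain ⟨hne, e', he', hpair⟩ := toSG_adj.1 hadj
    rcases Finset.mem_union.1 he' with he' | he'
    · exact absurd (hHS x (mem_verts_iff.2 ⟨e', he', by rw [hpair]; simp⟩)) hxS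
    · obtain ⟨x', y', hxy', hpair', hinf⟩ := mem_edgesAlong_iff.1 he'
      rcases pair_eq hne (hpair.symm.trans hpair') with ⟨h1, h2⟩ | ⟨h1, h2⟩
      · subst h1; subst h2
        exact Or.inl hinf
      · subst h1; subst h2
        exact Or.inr hinf
  have hclaimA : ∀ i ≤ k, ∀ t, ([f i, t] <:+: Q ∨ [t, f i] <:+: Q) →
      s(f i, t) ∈ w.edges := by
    intro i hik t ht
    have hzsupp : f i ∈ w.support := hcov _ ((hvertsQ _).2 (hfQ i hik))
    obtain ⟨y₁, y₂, hy12, hE1, hE2⟩ := cycle_two_edges hw hzsupp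
    have h1 := hedge_or _ _ hE1 (hfS i)
    have h2 := hedge_or _ _ hE2 (hfS i)
    have hty : t = y₁ ∨ t = y₂ := by
      rcases ht with ht | ht
      · rcases h1 with h1 | h1
        · exact Or.inl (succ_unique hQnd ht h1)
        · rcases h2 with h2 | h2
          · exact Or.inr (succ_unique hQnd ht h2)
          · exact absurd (pred_unique hQnd h1 h2) hy12
      · rcases h1 with h1 | h1
        · rcases h2 with h2 | h2
          · exact absurd (succ_unique hQnd h1 h2) hy12
          · exact Or.inr (pred_unique hQnd ht h2)
        · exact Or.inl (pred_unique hQnd ht h1)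
    rcases hty with rfl | rfl
    · exact hE1
    · exact hE2
  have hPsub : ∀ q ∈ pairs Q, q ∈ w.edges := by
    intro q hq
    obtain ⟨x, y, rfl, hinf⟩ := mem_pairs_iff.1 hq
    rcases interl_pair b zs vs hzslen (hQform ▸ hinf) with hfr | hfr
    · have hxf : ∃ i, i ≤ k ∧ x = f i := by
        rcases hfr with h | h
        · obtain ⟨i, hik, rfl⟩ := hzm _ h
          exact ⟨i, le_of_lt hik, rfl⟩
        · exact ⟨k, le_rfl, h⟩
      obtain ⟨i, hik, rfl⟩ := hxf
      exact hclaimA i hik y (Or.inl hinf)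
    · have hyf : ∃ i, i ≤ k ∧ y = f i := by
        rcases hfr with h | h
        · obtain ⟨i, hik, rfl⟩ := hzm _ h
          exact ⟨i, le_of_lt hik, rfl⟩
        · exact ⟨k, le_rfl, h⟩
      obtain ⟨i, hik, rfl⟩ := hyf
      have := hclaimA i hik x (Or.inr hinf)
      rw [Sym2.eq_swap]
      exact this
  -- counting
  have hnodupE : w.edges.Nodup := hw.isCircuit.isTrail.edges_nodup
  have htail_nd : w.support.tail.Nodup := hw.support_nodup
  have hv0tail : v0 ∈ w.support.tail := by
    obtain ⟨u, hadj', q, hq'⟩ := SimpleGraph.Walk.not_nil_iff.1 hw.not_nil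
    rw [hq', SimpleGraph.Walk.support_cons, List.tail_cons]
    exact q.end_mem_support
  have htail_mem : ∀ x, x ∈ w.support.tail ↔ x ∈ Q := by
    intro x
    constructor
    · intro hx
      exact (hvertsQ x).1 (support_subset_verts w hw.not_nil x (List.tail_subset _ hx))
    · intro hx
      have := hcov x ((hvertsQ x).2 hx)
      rw [w.support_eq_cons, List.mem_cons] at this
      rcases this with rfl | h
      · exact hv0tail
      · exact h
  have hlen_tail : w.support.tail.length = w.length := by
    have h1 := w.length_support
    simp [List.length_tail, h1]
  have htailQ : w.support.tail.toFinset = Q.toFinset := by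
    ext x
    simp only [List.mem_toFinset]
    exact htail_mem x
  have hwlen : w.length = Q.length := by
    rw [← hlen_tail, ← List.toFinset_card_of_nodup htail_nd, htailQ,
      List.toFinset_card_of_nodup hQnd]
  set P : List (Sym2 V) := pairs Q with hP
  have hPnd : P.Nodup := pairs_nodup hQnd
  have hPlen : P.length + 1 = Q.length := by
    rcases length_pairs Q with h | h
    · exact h
    · rw [hQ] at h
      simp at h
  have hPsubF : P.toFinset ⊆ w.edges.toFinset := by
    intro q hq
    rw [List.mem_toFinset] at hq ⊢
    exact hPsub q hq
  have hcard1 : (w.edges.toFinset \ P.toFinset).card = 1 := by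
    rw [Finset.card_sdiff_of_subset hPsubF, List.toFinset_card_of_nodup hnodupE,
      List.toFinset_card_of_nodup hPnd, w.length_edges, hwlen]
    omega
  obtain ⟨estar, hestar⟩ := Finset.card_eq_one.1 hcard1
  have hsplit : ∀ q ∈ w.edges, q ∈ P ∨ q = estar := by
    intro q hq
    by_cases hqP : q ∈ P
    · exact Or.inl hqP
    · right
      have hmem : q ∈ w.edges.toFinset \ P.toFinset := by
        rw [Finset.mem_sdiff, List.mem_toFinset, List.mem_toFinset]
        exact ⟨hq, hqP⟩
      rw [hestar, Finset.mem_singleton] at hmem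
      exact hmem
  have hbtail : b ∉ M ++ [a] := by
    have h1 := hQnd
    rw [hQ, List.nodup_cons] at h1
    exact h1.1
  have hedgeA : ∀ y, s(a, y) ∈ w.edges → y ≠ f k → s(a, y) = estar := by
    intro y hy hyk
    rcases hsplit _ hy with hmem | h
    · exfalso
      obtain ⟨x', y', heq, hinf⟩ := mem_pairs_iff.1 hmem
      rw [Sym2.mk_eq_mk_iff (p := (a, y)) (q := (x', y'))] at heq
      rcases heq with h | h
      · rw [Prod.ext_iff] at h
        obtain ⟨h1, h2⟩ := h
        simp only at h1 h2
        subst h1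
        subst h2
        have h' := (infix_pair_mem hinf).1
        rw [hQdrop, List.mem_cons] at h'
        rcases h' with h' | h'
        · exact hab h'
        · exact haM h'
      · rw [Prod.ext_iff] at h
        obtain ⟨h1, h2⟩ := h
        simp only at h1 h2
        subst h1
        subst h2
        exact hyk (pred_unique hQnd hinf hfkA)
    · exact h
  have hedgeB : ∀ y, s(b, y) ∈ w.edges → y ≠ m0 → s(b, y) = estar := by
    intro y hy hym
    rcases hsplit _ hy with hmem | h
    · exfalso
      obtain ⟨x', y', heq, hinf⟩ := mem_pairs_iff.1 hmem
      rw [Sym2.mk_eq_mk_iff (p := (b, y)) (q := (x', y'))] at heq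
      rcases heq with h | h
      · rw [Prod.ext_iff] at h
        obtain ⟨h1, h2⟩ := h
        simp only at h1 h2
        subst h1
        subst h2
        exact hym (succ_unique hQnd hinf hm0Q)
      · rw [Prod.ext_iff] at h
        obtain ⟨h1, h2⟩ := h
        simp only at h1 h2
        subst h1
        subst h2
        have hbt := (infix_pair_mem hinf).2
        rw [hQ, List.tail_cons] at hbt
        exact hbtail hbt
    · exact h
  obtain ⟨ya, hya, hyaE⟩ : ∃ y, s(a, y) ∈ w.edges ∧ s(a, y) = estar := by
    obtain ⟨y₁, y₂, hy12, hE1, hE2⟩ := cycle_two_edges hw (hcov a ((hvertsQ a).2 haQ))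
    by_cases h1 : y₁ = f k
    · refine ⟨y₂, hE2, hedgeA y₂ hE2 ?_⟩
      intro h2
      exact hy12 (h1.trans h2.symm)
    · exact ⟨y₁, hE1, hedgeA y₁ hE1 h1⟩
  obtain ⟨yb, hyb, hybE⟩ : ∃ y, s(b, y) ∈ w.edges ∧ s(b, y) = estar := by
    obtain ⟨y₁, y₂, hy12, hE1, hE2⟩ := cycle_two_edges hw (hcov b ((hvertsQ b).2 hbQ))
    by_cases h1 : y₁ = m0
    · refine ⟨y₂, hE2, hedgeB y₂ hE2 ?_⟩
      intro h2
      exact hy12 (h1.trans h2.symm)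
    · exact ⟨y₁, hE1, hedgeB y₁ hE1 h1⟩
  have habE : s(a, b) ∈ w.edges := by
    have heq : s(a, ya) = s(b, yb) := hyaE.trans hybE.symm
    rw [Sym2.mk_eq_mk_iff (p := (a, ya)) (q := (b, yb))] at heq
    rcases heq with h | h
    · rw [Prod.ext_iff] at h
      obtain ⟨h1, -⟩ := h
      simp only at h1
      exact absurd h1 hab
    · rw [Prod.swap_prod_mk, Prod.ext_iff] at h
      obtain ⟨-, h2⟩ := h
      simp only at h2
      rw [← h2]
      exact hya
  -- final contradiction
  have hadj := (EGraph.toSG (H ∪ F)).mem_edgeSet.1 (w.edges_subset_edgeSet habE)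
  obtain ⟨-, e', he', hpair⟩ := toSG_adj.1 hadj
  rcases Finset.mem_union.1 he' with he' | he'
  · exact heH (by rwa [show e = e' from Subtype.ext (he1.trans hpair.symm)])
  · obtain ⟨x', y', hxy', hpair', hinf⟩ := mem_edgesAlong_iff.1 he'
    rcases pair_eq hab (hpair.symm.trans hpair') with ⟨h1, h2⟩ | ⟨h1, h2⟩
    · subst h1; subst h2
      exact hnotAB hinf
    · subst h1; subst h2
      exact hnotBA hinf

end Ham

/-- Two graphs are strongly equivalent with respect to hamiltonicity iff they
are equal. -/
theorem stmt12 {V : Type} [Countable V] [Infinite V] [DecidableEq V]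
    (G H : EGraph V) :
    (∀ F : EGraph V,
        (EGraph.IsHamiltonian (G ∪ F) ↔ EGraph.IsHamiltonian (H ∪ F))) ↔
      G = H := by
  constructor
  · intro hF
    apply Finset.ext
    intro e
    constructor
    · intro he
      by_contra heH
      exact Ham.key hF he heH
    · intro he
      by_contra heG
      exact Ham.key (fun F => (hF F).symm) he heG
  · rintro rfl
    intro F
    rfl
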